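/- Let 𝓗 be a hypergraph on a finite vertex set V and let X ⊆ V be nonempty. There exists a minimal transversal H of 𝓗 with X ⊆ H if and only if there exists a choice of edges (E_x)_{x∈X} with E_x ∈ 𝓗 and E_x ∩ X = {x} for every x ∈ X, such that for every edge T ∈ 𝓗 with T ∩ X = ∅ one has T ⊄ ⋃_{x∈X} E_x. -/

import Mathlib

/-- For nonempty `X ⊆ V`, there is a minimal transversal of `𝓗` containing `X`
iff there is a choice of edges `(E_x)_{x∈X}` with `E_x ∈ 𝓗` and `E_x ∩ X = {x}`
such that no edge `T ∈ 𝓗` with `T ∩ X = ∅` is contained in `⋃_{x∈X} E_x`. -/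
theorem extension_iff_witness_selection {α : Type*} [DecidableEq α]
    (V : Finset α) (𝓗 : Finset (Finset α)) (hEV : ∀ E ∈ 𝓗, E ⊆ V)
    (X : Finset α) (hXV : X ⊆ V) (hXne : X.Nonempty) :
    (∃ H : Finset α, H ⊆ V ∧ X ⊆ H ∧ (∀ E ∈ 𝓗, (E ∩ H).Nonempty) ∧
        ∀ H' ⊂ H, ¬ (∀ E ∈ 𝓗, (E ∩ H').Nonempty)) ↔
      (∃ E : α → Finset α,
        (∀ x ∈ X, E x ∈ 𝓗 ∧ E x ∩ X = {x}) ∧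
        ∀ T ∈ 𝓗, T ∩ X = ∅ → ¬ T ⊆ X.biUnion E) := by
  classical
  constructor
  · rintro ⟨H, hHV, hXH, htr, hmin⟩
    have key : ∀ x, ∃ Ex, x ∈ X → (Ex ∈ 𝓗 ∧ Ex ∩ H = {x}) := by
      intro x
      by_cases hx : x ∈ X
      · have hsub : H.erase x ⊂ H := Finset.erase_ssubset (hXH hx)
        have h1 := hmin _ hsub
        push_neg at h1
        obtain ⟨Ex, hEx, hEe⟩ := h1
        refine ⟨Ex, fun _ => ⟨hEx, ?_⟩⟩
        have hsub1 : Ex ∩ H ⊆ {x} := by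
          intro y hy
          rw [Finset.mem_inter] at hy
          rw [Finset.mem_singleton]
          by_contra hyx
          exact Finset.nonempty_iff_ne_empty.mp ⟨y, Finset.mem_inter.mpr ⟨hy.1, Finset.mem_erase.mpr ⟨hyx, hy.2⟩⟩⟩ hEe
        rcases Finset.subset_singleton_iff.mp hsub1 with h | h
        · exact absurd h (htr Ex hEx).ne_empty
        · exact h
      · exact ⟨∅, fun h => absurd h hx⟩
    choose E hEprop using key
    refine ⟨E, ?_, ?_⟩
    · intro x hx
      obtain ⟨hEm, hEH⟩ := hEprop x hx
      refine ⟨hEm, ?_⟩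
      have hxE : x ∈ E x := by
        have : x ∈ E x ∩ H := by rw [hEH]; exact Finset.mem_singleton_self x
        exact (Finset.mem_inter.mp this).1
      have hsub1 : E x ∩ X ⊆ {x} := by
        intro y hy
        rw [Finset.mem_inter] at hy
        have : y ∈ E x ∩ H := Finset.mem_inter.mpr ⟨hy.1, hXH hy.2⟩
        rw [hEH] at this; exact this
      rcases Finset.subset_singleton_iff.mp hsub1 with h | h
      · exact absurd h (Finset.nonempty_iff_ne_empty.mp ⟨x, Finset.mem_inter.mpr ⟨hxE, hx⟩⟩)
      · exact h
    · intro T hT hTX hTsub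
      obtain ⟨y, hy⟩ := htr T hT
      rw [Finset.mem_inter] at hy
      obtain ⟨x, hx, hyE⟩ := Finset.mem_biUnion.mp (hTsub hy.1)
      have : y ∈ E x ∩ H := Finset.mem_inter.mpr ⟨hyE, hy.2⟩
      rw [(hEprop x hx).2] at this
      rw [Finset.mem_singleton] at this
      subst this
      have : y ∈ T ∩ X := Finset.mem_inter.mpr ⟨hy.1, hx⟩
      rw [hTX] at this
      exact absurd this (Finset.notMem_empty y)
  · rintro ⟨E, hE, hT⟩
    set W := X.biUnion E with hW
    have hpick : ∀ T, ∃ t, T ∈ 𝓗 → T ∩ X = ∅ → t ∈ T \ W := by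
      intro T
      by_cases h : T ∈ 𝓗 ∧ T ∩ X = ∅
      · obtain ⟨t, ht, htW⟩ := Finset.not_subset.mp (hT T h.1 h.2)
        exact ⟨t, fun _ _ => Finset.mem_sdiff.mpr ⟨ht, htW⟩⟩
      · exact ⟨hXne.choose, fun h1 h2 => absurd ⟨h1, h2⟩ h⟩
    choose f hf using hpick
    set H₀ : Finset α := X ∪ (𝓗.filter fun T => T ∩ X = ∅).image f with hH₀
    have hH₀V : H₀ ⊆ V := by
      intro y hy
      rcases Finset.mem_union.mp hy with h | h
      · exact hXV h
      · obtain ⟨T, hTm, rfl⟩ := Finset.mem_image.mp h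
        rw [Finset.mem_filter] at hTm
        exact hEV T hTm.1 (Finset.mem_sdiff.mp (hf T hTm.1 hTm.2)).1
    have hH₀tr : ∀ T ∈ 𝓗, (T ∩ H₀).Nonempty := by
      intro T hTm
      by_cases h : T ∩ X = ∅
      · refine ⟨f T, Finset.mem_inter.mpr ⟨(Finset.mem_sdiff.mp (hf T hTm h)).1, ?_⟩⟩
        exact Finset.mem_union_right _ (Finset.mem_image_of_mem f (Finset.mem_filter.mpr ⟨hTm, h⟩))
      · obtain ⟨y, hy⟩ := Finset.nonempty_iff_ne_empty.mpr h
        rw [Finset.mem_inter] at hy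
        exact ⟨y, Finset.mem_inter.mpr ⟨hy.1, Finset.mem_union_left _ hy.2⟩⟩
    have hXsub : ∀ S ⊆ H₀, (∀ T ∈ 𝓗, (T ∩ S).Nonempty) → X ⊆ S := by
      intro S hS htrS x hx
      obtain ⟨hEm, hEX⟩ := hE x hx
      obtain ⟨y, hy⟩ := htrS (E x) hEm
      rw [Finset.mem_inter] at hy
      have hyW : y ∈ W := Finset.mem_biUnion.mpr ⟨x, hx, hy.1⟩
      have hyH₀ := hS hy.2
      rcases Finset.mem_union.mp hyH₀ with h | h
      · have : y ∈ E x ∩ X := Finset.mem_inter.mpr ⟨hy.1, h⟩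
        rw [hEX, Finset.mem_singleton] at this
        subst this; exact hy.2
      · obtain ⟨T, hTm, hfT⟩ := Finset.mem_image.mp h
        rw [Finset.mem_filter] at hTm
        have := (Finset.mem_sdiff.mp (hf T hTm.1 hTm.2)).2
        rw [hfT] at this
        exact absurd hyW this
    -- take a minimum-cardinality transversal contained in H₀
    set 𝒮 : Finset (Finset α) :=
      H₀.powerset.filter (fun S => ∀ T ∈ 𝓗, (T ∩ S).Nonempty) with h𝒮
    have hH₀mem : H₀ ∈ 𝒮 := by
      rw [h𝒮, Finset.mem_filter]
      exact ⟨Finset.mem_powerset.mpr (le_refl _), hH₀tr⟩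
    obtain ⟨S, hSmem, hSmin⟩ := Finset.exists_min_image 𝒮 Finset.card ⟨H₀, hH₀mem⟩
    rw [h𝒮, Finset.mem_filter, Finset.mem_powerset] at hSmem
    obtain ⟨hSH₀, hStr⟩ := hSmem
    refine ⟨S, fun y hy => hH₀V (hSH₀ hy), hXsub S hSH₀ hStr, hStr, ?_⟩
    intro S' hS' htrS'
    have hS'mem : S' ∈ 𝒮 := by
      rw [h𝒮, Finset.mem_filter, Finset.mem_powerset]
      exact ⟨(hS'.subset).trans hSH₀, htrS'⟩
    have := hSmin S' hS'mem
    exact absurd (Finset.card_lt_card hS') (not_lt.mpr this)
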